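/- Let V: ℝ^n → ℝ be V(x) = xᵀPx with P symmetric positive definite, and suppose along all solutions of a linear ODE ẋ = Ax we have V̇(x) = xᵀ(AᵀP + PA)x ≤ -ρ‖Cx‖² for some ρ > 0 and matrix C, together with the property that the largest invariant set contained in {x : Cx = 0} is {0}. Then the origin is asymptotically stable (all solutions converge to 0). -/

import Mathlib

open Matrix Filter

section lasalle_aux

variable {n p : ℕ}

private lemma quad_hasDerivAt' (P : Matrix (Fin n) (Fin n) ℝ) {x : ℝ → Fin n → ℝ}
    {x' : Fin n → ℝ} {t : ℝ} (hx : HasDerivAt x x' t) :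
    HasDerivAt (fun s => x s ⬝ᵥ P.mulVec (x s))
      (x' ⬝ᵥ P.mulVec (x t) + x t ⬝ᵥ P.mulVec x') t := by
  have hcomp : ∀ i, HasDerivAt (fun s => x s i) (x' i) t := fun i =>
    (ContinuousLinearMap.proj (R := ℝ) (φ := fun _ : Fin n => ℝ) i).hasFDerivAt.comp_hasDerivAt t hx
  have h : HasDerivAt (fun s => ∑ i, x s i * ∑ j, P i j * x s j)
      (∑ i, (x' i * ∑ j, P i j * x t j + x t i * ∑ j, P i j * x' j)) t := by
    apply HasDerivAt.fun_sum
    intro i _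
    exact (hcomp i).mul (HasDerivAt.fun_sum fun j _ => ((hcomp j).const_mul (P i j)))
  have e1 : (fun s => x s ⬝ᵥ P.mulVec (x s)) = fun s => ∑ i, x s i * ∑ j, P i j * x s j := by
    funext s; simp [dotProduct, Matrix.mulVec]
  have e2 : x' ⬝ᵥ P.mulVec (x t) + x t ⬝ᵥ P.mulVec x'
      = ∑ i, (x' i * ∑ j, P i j * x t j + x t i * ∑ j, P i j * x' j) := by
    simp [dotProduct, Matrix.mulVec, Finset.sum_add_distrib]
  rw [e1, e2]; exact h

private lemma quad_form_eq' (A P : Matrix (Fin n) (Fin n) ℝ) (v : Fin n → ℝ) :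
    A.mulVec v ⬝ᵥ P.mulVec v + v ⬝ᵥ P.mulVec (A.mulVec v)
      = v ⬝ᵥ (Aᵀ * P + P * A).mulVec v := by
  rw [Matrix.add_mulVec, dotProduct_add, ← Matrix.mulVec_mulVec, ← Matrix.mulVec_mulVec,
    Matrix.dotProduct_mulVec v Aᵀ, Matrix.vecMul_transpose]

private lemma quad_cont' (P : Matrix (Fin n) (Fin n) ℝ) :
    Continuous fun v : Fin n → ℝ => v ⬝ᵥ P.mulVec v := by
  have : (fun v : Fin n → ℝ => v ⬝ᵥ P.mulVec v)
      = fun v => ∑ i, v i * ∑ j, P i j * v j := by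
    funext v; simp [dotProduct, Matrix.mulVec]
  rw [this]
  exact continuous_finset_sum _ fun i _ => (continuous_apply i).mul
    (continuous_finset_sum _ fun j _ => continuous_const.mul (continuous_apply j))

private lemma dot_self_nonneg' (v : Fin p → ℝ) : 0 ≤ v ⬝ᵥ v :=
  Finset.sum_nonneg fun i _ => mul_self_nonneg (v i)

private lemma quad_smul' (P : Matrix (Fin n) (Fin n) ℝ) (a : ℝ) (v : Fin n → ℝ) :
    (a • v) ⬝ᵥ P.mulVec (a • v) = a ^ 2 * (v ⬝ᵥ P.mulVec v) := by
  rw [Matrix.mulVec_smul, smul_dotProduct, dotProduct_smul, smul_eq_mul,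
    smul_eq_mul]
  ring

/-- The linear vector field as a continuous linear map. -/
noncomputable def lasalleT (A : Matrix (Fin n) (Fin n) ℝ) : (Fin n → ℝ) →L[ℝ] (Fin n → ℝ) :=
  LinearMap.toContinuousLinearMap A.mulVecLin

private lemma lasalleT_apply (A : Matrix (Fin n) (Fin n) ℝ) (v : Fin n → ℝ) :
    lasalleT A v = A.mulVec v := rfl

/-- The flow of the linear ODE. -/
noncomputable def lasallePhi (A : Matrix (Fin n) (Fin n) ℝ) (t : ℝ) :
    (Fin n → ℝ) →L[ℝ] (Fin n → ℝ) :=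
  NormedSpace.exp (t • lasalleT A)

private lemma lasallePhi_zero (A : Matrix (Fin n) (Fin n) ℝ) (v : Fin n → ℝ) :
    lasallePhi A 0 v = v := by
  simp [lasallePhi, NormedSpace.exp_zero]

private lemma lasallePhi_add (A : Matrix (Fin n) (Fin n) ℝ) (t s : ℝ) (v : Fin n → ℝ) :
    lasallePhi A (t + s) v = lasallePhi A s (lasallePhi A t v) := by
  have hc : Commute (s • lasalleT A) (t • lasalleT A) :=
    ((Commute.refl (lasalleT A)).smul_left s).smul_right t
  have : lasallePhi A (t + s) = lasallePhi A s * lasallePhi A t := by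
    rw [lasallePhi, lasallePhi, lasallePhi, ← NormedSpace.exp_add_of_commute_of_mem_ball (𝕂 := ℝ) hc
      ((NormedSpace.expSeries_radius_eq_top ℝ ((Fin n → ℝ) →L[ℝ] (Fin n → ℝ))).symm ▸ edist_lt_top _ _)
      ((NormedSpace.expSeries_radius_eq_top ℝ ((Fin n → ℝ) →L[ℝ] (Fin n → ℝ))).symm ▸ edist_lt_top _ _), ← add_smul,
      add_comm]
  rw [this, ContinuousLinearMap.mul_apply]

private lemma lasallePhi_hasDerivAt (A : Matrix (Fin n) (Fin n) ℝ) (v : Fin n → ℝ) (t : ℝ) :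
    HasDerivAt (fun s => lasallePhi A s v) (A.mulVec (lasallePhi A t v)) t := by
  have h := hasDerivAt_exp_smul_const' (𝕂 := ℝ) (lasalleT A) t
  have h2 := (ContinuousLinearMap.apply ℝ (Fin n → ℝ) v).hasFDerivAt.comp_hasDerivAt t h
  simpa [lasallePhi, ContinuousLinearMap.mul_apply, lasalleT_apply, Function.comp_def] using h2

private lemma lasalle_sol_eq {A : Matrix (Fin n) (Fin n) ℝ} {x : ℝ → Fin n → ℝ}
    (hx : ∀ t, HasDerivAt x (A.mulVec (x t)) t) (r : ℝ) : x r = lasallePhi A r (x 0) := by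
  have habs : (0:ℝ) ≤ |r| := abs_nonneg r
  have h1 : -(|r| + 1) < (0:ℝ) := by linarith
  have h2 : (0:ℝ) < |r| + 1 := by linarith
  have hv : ∀ t ∈ Set.Ioo (-(|r| + 1)) (|r| + 1), LipschitzOnWith ‖lasalleT A‖₊ (fun y => A.mulVec y) Set.univ :=
    fun _ _ => (lasalleT A).lipschitz.lipschitzOnWith
  have := ODE_solution_unique_of_mem_Icc (v := fun _ y => A.mulVec y)
    (s := fun _ => Set.univ) (hv := hv) (t₀ := 0) (a := -(|r| + 1)) (b := |r| + 1)
    (f := x) (g := fun t => lasallePhi A t (x 0))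
    ⟨h1, h2⟩
    (fun t _ => (hx t).continuousAt.continuousWithinAt)
    (fun t _ => hx t)
    (fun t _ => Set.mem_univ _)
    (fun t _ => ((lasallePhi_hasDerivAt A (x 0) t).continuousAt).continuousWithinAt)
    (fun t _ => lasallePhi_hasDerivAt A (x 0) t)
    (fun t _ => Set.mem_univ _)
    (by show x 0 = lasallePhi A 0 (x 0); rw [lasallePhi_zero])
  exact this ⟨by linarith [neg_abs_le r], by linarith [le_abs_self r]⟩

private lemma posdef_lower' (hn : 0 < n) {P : Matrix (Fin n) (Fin n) ℝ} (hP : P.PosDef) :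
    ∃ c > 0, ∀ v : Fin n → ℝ, c * ‖v‖ ^ 2 ≤ v ⬝ᵥ P.mulVec v := by
  haveI : Nontrivial (Fin n → ℝ) :=
    ⟨⟨0, Function.const _ 1, fun h => by
      have := congrFun h ⟨0, hn⟩
      simp [Function.const] at this⟩⟩
  obtain ⟨v0, hv0, hmin⟩ := (isCompact_sphere (0 : Fin n → ℝ) 1).exists_isMinOn
    (NormedSpace.sphere_nonempty.mpr zero_le_one) (quad_cont' P).continuousOn
  have hv0n : ‖v0‖ = 1 := mem_sphere_zero_iff_norm.mp hv0
  have hv0ne : v0 ≠ 0 := by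
    intro h; rw [h, norm_zero] at hv0n; norm_num at hv0n
  refine ⟨v0 ⬝ᵥ P.mulVec v0, by simpa using hP.dotProduct_mulVec_pos hv0ne, ?_⟩
  intro v
  rcases eq_or_ne v 0 with rfl | hv
  · simp
  · have hnv : ‖v‖ ≠ 0 := norm_ne_zero_iff.mpr hv
    set w : Fin n → ℝ := ‖v‖⁻¹ • v with hw
    have hwn : ‖w‖ = 1 := by
      rw [hw, norm_smul, norm_inv, norm_norm, inv_mul_cancel₀ hnv]
    have hwm : w ∈ Metric.sphere (0 : Fin n → ℝ) 1 := mem_sphere_zero_iff_norm.mpr hwn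
    have hvw : v = ‖v‖ • w := by
      rw [hw, smul_smul, mul_inv_cancel₀ hnv, one_smul]
    have hQv : v ⬝ᵥ P.mulVec v = ‖v‖ ^ 2 * (w ⬝ᵥ P.mulVec w) := by
      conv_lhs => rw [hvw]
      exact quad_smul' P ‖v‖ w
    have hle : v0 ⬝ᵥ P.mulVec v0 ≤ w ⬝ᵥ P.mulVec w := hmin hwm
    rw [hQv]
    have h2 : (0:ℝ) ≤ ‖v‖ ^ 2 := sq_nonneg _
    nlinarith

end lasalle_aux

/-- LaSalle's invariance principle for linear systems: if `V(x) = xᵀPx` with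
`P ≻ 0` satisfies `V̇ = xᵀ(AᵀP+PA)x ≤ −ρ‖Cx‖²` and the largest invariant set
contained in `{x : Cx = 0}` is `{0}`, then every solution of `ẋ = Ax`
converges to the origin. -/
theorem lasalle_linear_asymptotic_stability
    {n p : ℕ} (A : Matrix (Fin n) (Fin n) ℝ) (C : Matrix (Fin p) (Fin n) ℝ)
    (P : Matrix (Fin n) (Fin n) ℝ) (ρ : ℝ)
    (hP : P.PosDef) (hρ : 0 < ρ)
    (hdiss : ∀ v : Fin n → ℝ,
      v ⬝ᵥ (Aᵀ * P + P * A).mulVec v ≤ -ρ * (C.mulVec v ⬝ᵥ C.mulVec v))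
    (hinv : ∀ x : ℝ → Fin n → ℝ,
      (∀ t, HasDerivAt x (A.mulVec (x t)) t) →
      (∀ t, C.mulVec (x t) = 0) → ∀ t, x t = 0) :
    ∀ x : ℝ → Fin n → ℝ,
      (∀ t, HasDerivAt x (A.mulVec (x t)) t) →
      Tendsto x atTop (nhds 0) := by
  intro x hx
  rcases Nat.eq_zero_or_pos n with hn | hn
  · subst hn
    have hx0 : x = fun _ => (0 : Fin 0 → ℝ) := funext fun t => funext fun i => i.elim0
    rw [hx0]; exact tendsto_const_nhds
  obtain ⟨c, hc, hlow⟩ := posdef_lower' hn hP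
  set Q : (Fin n → ℝ) → ℝ := fun v => v ⬝ᵥ P.mulVec v with hQdef
  have hQ0 : ∀ v, 0 ≤ Q v := fun v => by simpa using hP.posSemidef.dotProduct_mulVec_nonneg v
  set V : ℝ → ℝ := fun t => Q (x t) with hVdef
  have hVd : ∀ t, HasDerivAt V (x t ⬝ᵥ (Aᵀ * P + P * A).mulVec (x t)) t := fun t => by
    have := quad_hasDerivAt' P (hx t)
    rwa [quad_form_eq'] at this
  have hVnp : ∀ v : Fin n → ℝ, v ⬝ᵥ (Aᵀ * P + P * A).mulVec v ≤ 0 := fun v =>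
    (hdiss v).trans (by nlinarith [dot_self_nonneg' (C.mulVec v)])
  have hanti : Antitone V :=
    antitone_of_deriv_nonpos (fun t => (hVd t).differentiableAt)
      (fun t => by rw [(hVd t).deriv]; exact hVnp (x t))
  have hbdd : BddBelow (Set.range V) := ⟨0, fun y ⟨t, ht⟩ => ht ▸ hQ0 (x t)⟩
  set L := ⨅ t, V t with hLdef
  have hVL : Tendsto V atTop (nhds L) := tendsto_atTop_ciInf hanti hbdd
  set R := Real.sqrt (V 0 / c) with hRdef
  have hball : ∀ t : ℝ, 0 ≤ t → x t ∈ Metric.closedBall (0 : Fin n → ℝ) R := by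
    intro t ht
    have h1 : c * ‖x t‖ ^ 2 ≤ V 0 := (hlow (x t)).trans (hanti ht)
    have h2 : ‖x t‖ ^ 2 ≤ V 0 / c := (le_div_iff₀ hc).mpr (by linarith [mul_comm c (‖x t‖ ^ 2)])
    have h3 := Real.sqrt_le_sqrt h2
    rw [Real.sqrt_sq (norm_nonneg _)] at h3
    simpa [Metric.mem_closedBall, dist_zero_right] using h3
  by_contra hnot
  rw [Metric.tendsto_atTop] at hnot
  push_neg at hnot
  obtain ⟨ε, hε, hfreq⟩ := hnot
  choose t ht hd using fun k : ℕ => hfreq (max (k : ℝ) 0)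
  have htt : Tendsto t atTop atTop :=
    tendsto_atTop_mono (fun k => (le_max_left _ _).trans (ht k)) tendsto_natCast_atTop_atTop
  have htpos : ∀ k, (0:ℝ) ≤ t k := fun k => (le_max_right _ _).trans (ht k)
  obtain ⟨y, -, ψ, hψ, hy⟩ := (isCompact_closedBall (0 : Fin n → ℝ) R).tendsto_subseq
    (fun k => hball (t k) (htpos k))
  have hynorm : ε ≤ ‖y‖ := by
    have hcont : Tendsto (fun j => ‖x (t (ψ j))‖) atTop (nhds ‖y‖) :=
      (continuous_norm.tendsto y).comp hy
    exact ge_of_tendsto' hcont (fun j => by simpa [dist_zero_right] using hd (ψ j))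
  set z : ℝ → Fin n → ℝ := fun s => lasallePhi A s y with hzdef
  have hz : ∀ s, HasDerivAt z (A.mulVec (z s)) s := fun s => lasallePhi_hasDerivAt A y s
  have hflow : ∀ a s : ℝ, x (a + s) = lasallePhi A s (x a) := by
    intro a s
    rw [lasalle_sol_eq hx (a + s), lasalle_sol_eq hx a, ← lasallePhi_add]
  have hconst : ∀ s, Q (z s) = L := by
    intro s
    have h1 : Tendsto (fun j => x (t (ψ j) + s)) atTop (nhds (z s)) := by
      have he : (fun j => x (t (ψ j) + s)) = fun j => lasallePhi A s (x (t (ψ j))) :=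
        funext fun j => hflow _ _
      rw [he]
      exact ((lasallePhi A s).continuous.tendsto y).comp hy
    have h2 : Tendsto (fun j => Q (x (t (ψ j) + s))) atTop (nhds (Q (z s))) :=
      ((quad_cont' P).tendsto _).comp h1
    have h3 : Tendsto (fun j => V (t (ψ j) + s)) atTop (nhds L) := by
      apply hVL.comp
      exact tendsto_atTop_add_const_right _ s (htt.comp hψ.tendsto_atTop)
    exact tendsto_nhds_unique h2 h3
  have hCz : ∀ s, C.mulVec (z s) = 0 := by
    intro s
    have hdz : HasDerivAt (fun s => Q (z s)) (z s ⬝ᵥ (Aᵀ * P + P * A).mulVec (z s)) s := by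
      have := quad_hasDerivAt' P (hz s)
      rwa [quad_form_eq'] at this
    have heq : (fun s => Q (z s)) = fun _ => L := funext hconst
    rw [heq] at hdz
    have h0 : z s ⬝ᵥ (Aᵀ * P + P * A).mulVec (z s) = 0 :=
      (hdz.unique (hasDerivAt_const s L)).symm ▸ rfl
    have hd2 := hdiss (z s)
    rw [h0] at hd2
    have hnn := dot_self_nonneg' (C.mulVec (z s))
    have hz0 : C.mulVec (z s) ⬝ᵥ C.mulVec (z s) = 0 := by nlinarith
    exact dotProduct_self_eq_zero.mp hz0
  have hy0 : y = 0 := by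
    have h := hinv z hz hCz 0
    simp only [hzdef] at h
    rwa [lasallePhi_zero] at h
  rw [hy0, norm_zero] at hynorm
  linarith
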